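/- In the setting of the previous statement, suppose additionally that φ₀^δ(∅) ⊊ N₀ for every δ < α, that ∇(X) = ∅ whenever X ⊊ N₀, and that φ₁^γ(∅) ⊊ φ₁^{γ+1}(∅) for all γ < β while φ₁^β(∅) = N₁. Then ψ^{α+γ}(∅) ∩ N₁ = φ₁^γ(∅) for every ordinal γ, and ψ converges to its least fixed point N in exactly α + β steps, i.e., ψ^{α+β}(∅) = N and ψ^{η}(∅) ⊊ ψ^{η+1}(∅) for every η < α + β. -/

import Mathlib

open Set

universe u v
/-- Ordinal-indexed iterates of a map on a powerset, starting from ∅,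
taking unions at limit stages. -/
noncomputable def iter {A : Type u} (f : Set A → Set A) (o : Ordinal.{v}) : Set A :=
  Ordinal.limitRecOn o ∅ (fun _ ih => f ih)
    (fun o _ ih => ⋃ (b : Ordinal.{v}) (h : b < o), ih b h)

lemma iter_zero {A : Type u} (f : Set A → Set A) : iter f (0 : Ordinal.{v}) = ∅ :=
  Ordinal.limitRecOn_zero ..

lemma iter_succ {A : Type u} (f : Set A → Set A) (o : Ordinal.{v}) :
    iter f (o + 1) = f (iter f o) :=
  Ordinal.limitRecOn_add_one ..

lemma iter_limit {A : Type u} (f : Set A → Set A) {o : Ordinal.{v}} (h : Order.IsSuccLimit o) :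
    iter f o = ⋃ (b : Ordinal.{v}) (_ : b < o), iter f b := by
  exact Ordinal.limitRecOn_limit _ _ _ _ h

lemma iter_le_succ {A : Type u} {f : Set A → Set A} (hf : Monotone f) (o : Ordinal.{v}) :
    iter f o ⊆ iter f (o + 1) := by
  induction o using Ordinal.limitRecOn with
  | zero => rw [iter_zero]; exact empty_subset _
  | add_one o ih =>
      rw [iter_succ, iter_succ]
      exact hf ih
  | limit o ho ih =>
      rw [iter_limit f ho, iter_succ, iter_limit f ho]
      refine iUnion₂_subset fun b hb => ?_
      refine (ih b hb).trans ?_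
      rw [iter_succ]
      exact hf (fun x hx => mem_iUnion₂.2 ⟨b, hb, hx⟩)

lemma iter_mono {A : Type u} {f : Set A → Set A} (hf : Monotone f) :
    ∀ {o o' : Ordinal.{v}}, o ≤ o' → iter f o ⊆ iter f o' := by
  intro o o' h
  induction o' using Ordinal.limitRecOn with
  | zero => rw [nonpos_iff_eq_zero.1 h]
  | add_one o' ih =>
      rcases lt_or_eq_of_le h with h | h
      · exact (ih (Order.lt_add_one_iff.1 h)).trans (iter_le_succ hf o')
      · rw [h]
  | limit o' ho ih =>
      rcases lt_or_eq_of_le h with h | h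
      · rw [iter_limit f ho]
        exact fun x hx => mem_iUnion₂.2 ⟨o, h, hx⟩
      · rw [h]

lemma iter_sub {A : Type u} {f : Set A → Set A} {T : Set A} (hr : ∀ S, f S ⊆ T) :
    ∀ o : Ordinal.{v}, iter f o ⊆ T := by
  intro o
  induction o using Ordinal.limitRecOn with
  | zero => rw [iter_zero]; exact empty_subset _
  | add_one o ih => rw [iter_succ]; exact hr _
  | limit o ho ih => rw [iter_limit f ho]; exact iUnion₂_subset ih

theorem stmt18 {N : Type u} (N₀ N₁ : Set N) (hdis : Disjoint N₀ N₁)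
    (hun : N₀ ∪ N₁ = Set.univ)
    (φ₀ φ₁ nab : Set N → Set N)
    (h0 : Monotone φ₀) (h1 : Monotone φ₁) (hd : Monotone nab)
    (hr0 : ∀ S, φ₀ S ⊆ N₀) (hr1 : ∀ S, φ₁ S ⊆ N₁) (hrd : ∀ S, nab S ⊆ N₁)
    (hdN : nab N₀ = N₁) (hdempty : ∀ X, X ⊂ N₀ → nab X = ∅)
    (ψ : Set N → Set N)
    (hψ : ∀ X, ψ X = φ₀ (X ∩ N₀) ∪ (φ₁ (X ∩ N₁) ∩ nab (X ∩ N₀)))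
    (α β : Ordinal.{v})
    (hα : iter φ₀ α = N₀) (hlt0 : ∀ δ < α, iter φ₀ δ ⊂ N₀)
    (hstep0 : ∀ δ < α, iter φ₀ δ ⊂ iter φ₀ (δ + 1))
    (hβ : iter φ₁ β = N₁)
    (hstep1 : ∀ γ < β, iter φ₁ γ ⊂ iter φ₁ (γ + 1)) :
    (∀ γ : Ordinal.{v}, iter ψ (α + γ) ∩ N₁ = iter φ₁ γ) ∧
      iter ψ (α + β) = Set.univ ∧
      (∀ η < α + β, iter ψ η ⊂ iter ψ (η + 1)) := by
  have hψmono : Monotone ψ := by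
    intro X Y hXY
    rw [hψ X, hψ Y]
    exact union_subset_union
      (h0 (inter_subset_inter_left _ hXY))
      (inter_subset_inter (h1 (inter_subset_inter_left _ hXY))
        (hd (inter_subset_inter_left _ hXY)))
  have hsub0 : ∀ δ : Ordinal.{v}, iter φ₀ δ ⊆ N₀ := iter_sub hr0
  have hsub1 : ∀ δ : Ordinal.{v}, iter φ₁ δ ⊆ N₁ := iter_sub hr1
  -- Phase 1: iter ψ δ = iter φ₀ δ for δ ≤ α
  have key1 : ∀ δ : Ordinal.{v}, δ ≤ α → iter ψ δ = iter φ₀ δ := by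
    intro δ
    induction δ using Ordinal.limitRecOn with
    | zero => intro _; rw [iter_zero, iter_zero]
    | add_one δ ih =>
        intro h
        have hδ : δ < α := (Order.add_one_le_iff).1 h
        rw [iter_succ, iter_succ, ih hδ.le, hψ]
        have h1' : iter φ₀ δ ∩ N₀ = iter φ₀ δ := inter_eq_left.2 (hsub0 δ)
        rw [h1', hdempty _ (hlt0 δ hδ), inter_empty, union_empty]
    | limit δ hδ ih =>
        intro h
        rw [iter_limit ψ hδ, iter_limit φ₀ hδ]
        exact iUnion₂_congr fun b hb => ih b hb (hb.le.trans h)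
  have hψα : iter ψ α = N₀ := by rw [key1 α le_rfl, hα]
  have hφ₀N₀ : φ₀ N₀ = N₀ := by
    refine subset_antisymm (hr0 _) ?_
    have := iter_mono h0 (le_of_lt (Order.lt_succ α))
    rwa [hα, ← Ordinal.add_one_eq_succ, iter_succ, hα] at this
  -- Phase 2: iter ψ (α + γ) = N₀ ∪ iter φ₁ γ
  have key2 : ∀ γ : Ordinal.{v}, iter ψ (α + γ) = N₀ ∪ iter φ₁ γ := by
    intro γ
    induction γ using Ordinal.limitRecOn with
    | zero => rw [add_zero, iter_zero, union_empty, hψα]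
    | add_one γ ih =>
        rw [← add_assoc, iter_succ, ih, hψ, iter_succ]
        have e0 : (N₀ ∪ iter φ₁ γ) ∩ N₀ = N₀ := by
          rw [union_inter_distrib_right, inter_self,
            (hdis.symm.mono_left (hsub1 γ)).inter_eq, union_empty]
        have e1 : (N₀ ∪ iter φ₁ γ) ∩ N₁ = iter φ₁ γ := by
          rw [union_inter_distrib_right, hdis.inter_eq, empty_union,
            inter_eq_left.2 (hsub1 γ)]
        rw [e0, e1, hdN, hφ₀N₀, inter_eq_left.2 (hr1 _)]
    | limit γ hγ ih =>
        have hlim : Order.IsSuccLimit (α + γ) := Ordinal.isSuccLimit_add α hγ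
        rw [iter_limit ψ hlim, iter_limit φ₁ hγ]
        apply subset_antisymm
        · refine iUnion₂_subset fun b hb => ?_
          rcases (Ordinal.lt_add_iff hγ.pos.ne').1 hb with ⟨d, hd, hbd⟩
          refine (iter_mono hψmono hbd).trans ?_
          rw [ih d hd]
          exact union_subset_union_right _
            (fun x hx => mem_iUnion₂.2 ⟨d, hd, hx⟩)
        · refine union_subset ?_ ?_
          · rw [← hψα]
            have hαlt : α < α + γ := by
              simpa using (add_lt_add_iff_left α).2 hγ.pos
            exact fun x hx => mem_iUnion₂.2 ⟨α, hαlt, hx⟩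
          · refine iUnion₂_subset fun d hd => ?_
            have : iter φ₁ d ⊆ iter ψ (α + d) := by
              rw [ih d hd]; exact subset_union_right
            have hlt : α + d < α + γ := (add_lt_add_iff_left α).2 hd
            exact this.trans (fun x hx => mem_iUnion₂.2 ⟨α + d, hlt, hx⟩)
  refine ⟨?_, ?_, ?_⟩
  · intro γ
    rw [key2 γ, union_inter_distrib_right, hdis.inter_eq, empty_union,
      inter_eq_left.2 (hsub1 γ)]
  · rw [key2 β, hβ, hun]
  · intro η hη
    rcases lt_or_ge η α with h | h
    · rw [key1 η h.le, key1 (η + 1) (Order.add_one_le_iff.2 h)]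
      exact hstep0 η h
    · obtain ⟨c, rfl⟩ : ∃ c, η = α + c := ⟨η - α, (Ordinal.add_sub_cancel_of_le h).symm⟩
      rw [add_lt_add_iff_left] at hη
      have := hstep1 c hη
      rw [key2 c, add_assoc, key2]
      constructor
      · exact union_subset_union_right _ this.subset
      · intro hcon
        obtain ⟨x, hx1, hx2⟩ := exists_of_ssubset this
        have hx : x ∈ N₀ ∪ iter φ₁ c := hcon (Or.inr hx1)
        rcases hx with hx | hx
        · exact absurd (hsub1 _ hx1) (fun h => hdis.ne_of_mem hx h rfl)
        · exact hx2 hx
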